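/- Let G be a nontrivial subgroup of (ℚ,+) and S = G ∩ ℚ⁺. Let u be a (possibly infinite) index set, v ∈ ℕ, and A a u × v rational matrix (finitely many nonzero entries per row) that is weakly image partition regular over S. Then there exists a u × v rational matrix C, with entries in the subgroup of ℚ generated by the entries of A, such that (1) {C y : y ∈ S^v} ⊆ {A x : x ∈ G^v}, and (2) for every finite colouring of S there exists x ∈ G^v with the entries of A x monochromatic and some y ∈ S^v with C y = A x. -/

import Mathlib

open scoped BigOperators

/-- Matrix–vector product over ℚ, via `finsum`. -/
noncomputable def mulVecQ {u v : Type} (A : u → v → ℚ) (x : v → ℚ) : u → ℚ :=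
  fun i => ∑ᶠ j, A i j * x j

/-- `A` is weakly image partition regular over `S` (colourings of `S`,
with witness vectors in `G`). -/
def WIPRQ' {u v : Type} (A : u → v → ℚ) (S G : Set ℚ) : Prop :=
  ∀ (k : ℕ) (φ : ℚ → Fin k), ∃ x : v → ℚ,
    (∀ j, x j ∈ G) ∧ (∀ i, mulVecQ A x i ∈ S) ∧
    (∀ i i', φ (mulVecQ A x i) = φ (mulVecQ A x i'))

namespace Stmt17Aux

variable {v : ℕ}

/-- The finite space of "order types" of a vector in `ℚ^v`: the rank of each
entry among the distinct values of the entries together with `0`, plus the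
rank of `0`. -/
abbrev TypeSp (v : ℕ) := (Fin v → Fin (v+1)) × Fin (v+1)

/-- The integer matrix associated to a type: entry `j i` is the coefficient
of the `i`-th consecutive gap in the telescoping expression of the `j`-th
value. -/
def Dmat (v : ℕ) (t : TypeSp v) (j i : Fin v) : ℤ :=
  if (t.2 : ℕ) ≤ (i : ℕ) ∧ (i : ℕ) < (t.1 j : ℕ) then 1
  else if (t.1 j : ℕ) ≤ (i : ℕ) ∧ (i : ℕ) < (t.2 : ℕ) then -1 else 0

/-- Sorted list of the distinct values of the entries of `x` together with 0. -/
noncomputable def Flist (x : Fin v → ℚ) : List ℚ :=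
  Finset.sort (insert (0:ℚ) (Finset.image x Finset.univ)) (· ≤ ·)

lemma length_Flist_le (x : Fin v → ℚ) : (Flist x).length ≤ v + 1 := by
  rw [Flist, Finset.length_sort]
  calc (insert (0:ℚ) (Finset.image x Finset.univ)).card
      ≤ (Finset.image x Finset.univ).card + 1 := Finset.card_insert_le _ _
    _ ≤ v + 1 := by
        have h := Finset.card_image_le (s := (Finset.univ : Finset (Fin v))) (f := x)
        simp only [Finset.card_univ, Fintype.card_fin] at h
        omega

lemma mem_Flist_x (x : Fin v → ℚ) (j : Fin v) : x j ∈ Flist x := by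
  rw [Flist, Finset.mem_sort]
  exact Finset.mem_insert_of_mem (Finset.mem_image_of_mem _ (Finset.mem_univ j))

lemma mem_Flist_zero (x : Fin v → ℚ) : (0:ℚ) ∈ Flist x := by
  rw [Flist, Finset.mem_sort]
  exact Finset.mem_insert_self _ _

/-- The type of a vector. -/
noncomputable def typeOf (x : Fin v → ℚ) : TypeSp v :=
  (fun j => ⟨(Flist x).idxOf (x j),
      lt_of_lt_of_le (List.idxOf_lt_length_iff.2 (mem_Flist_x x j)) (length_Flist_le x)⟩,
   ⟨(Flist x).idxOf 0,
      lt_of_lt_of_le (List.idxOf_lt_length_iff.2 (mem_Flist_zero x)) (length_Flist_le x)⟩)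

lemma tele (c : ℕ → ℚ) (a : ℕ) :
    ∀ b, a ≤ b → (∑ i ∈ Finset.Ico a b, (c (i+1) - c i)) = c b - c a := by
  intro b
  induction b with
  | zero => intro h; simp [Nat.le_zero.mp h]
  | succ n ih =>
    intro h
    rcases Nat.lt_or_ge a (n+1) with h' | h'
    · have ha : a ≤ n := Nat.lt_succ_iff.mp h'
      rw [Finset.sum_Ico_succ_top ha, ih ha]; ring
    · have : a = n+1 := le_antisymm h h'
      subst this; simp

/-- The mixed product identity: `(A·D) y = A (D y)`. -/
lemma mulVec_comp {u : Type} (A : u → Fin v → ℚ) (D : Fin v → Fin v → ℤ)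
    (y : Fin v → ℚ) :
    mulVecQ (fun i j => ∑ l : Fin v, A i l * (D l j : ℚ)) y
      = mulVecQ A (fun l => ∑ i : Fin v, (D l i : ℚ) * y i) := by
  funext i
  show (∑ᶠ j, (∑ l : Fin v, A i l * (D l j : ℚ)) * y j)
      = ∑ᶠ l, A i l * (∑ i' : Fin v, (D l i' : ℚ) * y i')
  rw [finsum_eq_sum_of_fintype, finsum_eq_sum_of_fintype]
  simp only [Finset.sum_mul, Finset.mul_sum, mul_assoc]
  exact Finset.sum_comm

/-- Reconstruction: any vector with entries in `G` can be written as
`Dmat (typeOf x)` applied to a vector of positive elements of `G`. -/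
lemma reconstruct (G : AddSubgroup ℚ) (s₀ : ℚ) (hs₀G : s₀ ∈ G) (hs₀pos : 0 < s₀)
    (x : Fin v → ℚ) (hx : ∀ j, x j ∈ G) :
    ∃ y : Fin v → ℚ, (∀ i, y i ∈ G ∧ 0 < y i) ∧
      ∀ j, x j = ∑ i : Fin v, ((Dmat v (typeOf x) j i : ℚ) * y i) := by
  classical
  let l : List ℚ := Flist x
  let m : ℕ := l.length
  let c : ℕ → ℚ := fun i => l.getD i 0
  have hml : m ≤ v + 1 := length_Flist_le x
  have hmem : ∀ {i : ℕ}, i < m → c i ∈ l := by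
    intro i h
    show l.getD i 0 ∈ l
    rw [List.getD_eq_getElem l 0 h]
    exact List.getElem_mem h
  have hG' : ∀ q ∈ l, q ∈ G := by
    intro q hq
    rw [show l = Flist x from rfl, Flist, Finset.mem_sort] at hq
    rcases Finset.mem_insert.mp hq with h | h
    · rw [h]; exact G.zero_mem
    · obtain ⟨j, -, rfl⟩ := Finset.mem_image.mp h; exact hx j
  have hsort : l.Pairwise (· < ·) := (Finset.sortedLT_sort _).pairwise
  have hmono : ∀ {i i' : ℕ}, i < i' → i' < m → c i < c i' := by
    intro i i' hii hi'
    have hi : i < m := lt_trans hii hi'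
    have h := hsort.rel_get_of_lt (a := ⟨i, hi⟩) (b := ⟨i', hi'⟩)
      (by exact hii)
    show l.getD i 0 < l.getD i' 0
    rw [List.getD_eq_getElem l 0 hi, List.getD_eq_getElem l 0 hi']
    simpa [List.get_eq_getElem] using h
  -- ranks
  have hrlt : ∀ j, ((typeOf x).1 j : ℕ) < m :=
    fun j => List.idxOf_lt_length_iff.2 (mem_Flist_x x j)
  have hplt : ((typeOf x).2 : ℕ) < m :=
    List.idxOf_lt_length_iff.2 (mem_Flist_zero x)
  have hcr : ∀ j, c ((typeOf x).1 j : ℕ) = x j := by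
    intro j
    have hlt : l.idxOf (x j) < l.length := List.idxOf_lt_length_iff.2 (mem_Flist_x x j)
    show l.getD (l.idxOf (x j)) 0 = x j
    rw [List.getD_eq_getElem l 0 hlt]
    simpa [List.get_eq_getElem] using List.idxOf_get hlt
  have hcp : c ((typeOf x).2 : ℕ) = 0 := by
    have hlt : l.idxOf (0:ℚ) < l.length := List.idxOf_lt_length_iff.2 (mem_Flist_zero x)
    show l.getD (l.idxOf (0:ℚ)) 0 = 0
    rw [List.getD_eq_getElem l 0 hlt]
    simpa [List.get_eq_getElem] using List.idxOf_get hlt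
  -- the vector of gaps
  refine ⟨fun i => if (i:ℕ)+1 < m then c ((i:ℕ)+1) - c (i:ℕ) else s₀, ?_, ?_⟩
  · intro i
    by_cases h : (i:ℕ)+1 < m
    · simp only [h, if_true]
      constructor
      · exact G.sub_mem (hG' _ (hmem h)) (hG' _ (hmem (lt_trans (Nat.lt_succ_self _) h)))
      · have := hmono (Nat.lt_succ_self (i:ℕ)) h
        linarith
    · simp only [h, if_false]
      exact ⟨hs₀G, hs₀pos⟩
  · intro j
    set r : ℕ := ((typeOf x).1 j : ℕ) with hrdef
    set p : ℕ := ((typeOf x).2 : ℕ) with hpdef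
    have hr : r < m := hrlt j
    have hp : p < m := hplt
    rcases le_or_gt p r with hpr | hrp
    · -- term is `if p ≤ i < r then gap else 0`
      have hterm : ∀ i : Fin v,
          ((Dmat v (typeOf x) j i : ℚ) * (if (i:ℕ)+1 < m then c ((i:ℕ)+1) - c (i:ℕ) else s₀))
            = if (i:ℕ) ∈ Finset.Ico p r then c ((i:ℕ)+1) - c (i:ℕ) else 0 := by
        intro i
        rw [Dmat]
        by_cases h1 : p ≤ (i:ℕ) ∧ (i:ℕ) < r
        · have him : (i:ℕ)+1 < m := lt_of_le_of_lt (Nat.succ_le_of_lt h1.2) hr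
          simp [← hpdef, ← hrdef, h1, him, Finset.mem_Ico]
        · have h2 : ¬(r ≤ (i:ℕ) ∧ (i:ℕ) < p) := by omega
          simp [← hpdef, ← hrdef, h1, h2, Finset.mem_Ico]
      calc x j = c r - c p := by rw [hcr j, hcp]; ring
        _ = ∑ i ∈ Finset.Ico p r, (c (i+1) - c i) := (tele c p r hpr).symm
        _ = ∑ i ∈ Finset.range v ∩ Finset.Ico p r, (c (i+1) - c i) := by
            congr 1
            exact (Finset.inter_eq_right.mpr (fun i hi => by
              rw [Finset.mem_Ico] at hi; rw [Finset.mem_range]; omega)).symm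
        _ = ∑ i ∈ Finset.range v, (if i ∈ Finset.Ico p r then c (i+1) - c i else 0) :=
            (Finset.sum_ite_mem _ _ _).symm
        _ = ∑ i : Fin v, (if (i:ℕ) ∈ Finset.Ico p r then c ((i:ℕ)+1) - c (i:ℕ) else 0) :=
            (Fin.sum_univ_eq_sum_range (fun i => if i ∈ Finset.Ico p r then c (i+1) - c i else 0) v).symm
        _ = ∑ i : Fin v, ((Dmat v (typeOf x) j i : ℚ)
              * (if (i:ℕ)+1 < m then c ((i:ℕ)+1) - c (i:ℕ) else s₀)) := by
            exact Finset.sum_congr rfl (fun i _ => (hterm i).symm)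
    · -- term is `if r ≤ i < p then -gap else 0`
      have hterm : ∀ i : Fin v,
          ((Dmat v (typeOf x) j i : ℚ) * (if (i:ℕ)+1 < m then c ((i:ℕ)+1) - c (i:ℕ) else s₀))
            = -(if (i:ℕ) ∈ Finset.Ico r p then c ((i:ℕ)+1) - c (i:ℕ) else 0) := by
        intro i
        rw [Dmat]
        by_cases h1 : r ≤ (i:ℕ) ∧ (i:ℕ) < p
        · have him : (i:ℕ)+1 < m := lt_of_le_of_lt (Nat.succ_le_of_lt h1.2) hp
          have h2 : ¬(p ≤ (i:ℕ) ∧ (i:ℕ) < r) := by omega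
          simp [← hpdef, ← hrdef, h1, h2, him, Finset.mem_Ico]
        · have h2 : ¬(p ≤ (i:ℕ) ∧ (i:ℕ) < r) := by omega
          simp [← hpdef, ← hrdef, h1, h2, Finset.mem_Ico]
      calc x j = -(c p - c r) := by rw [hcr j, hcp]; ring
        _ = -∑ i ∈ Finset.Ico r p, (c (i+1) - c i) := by rw [tele c r p (le_of_lt hrp)]
        _ = -∑ i ∈ Finset.range v ∩ Finset.Ico r p, (c (i+1) - c i) := by
            congr 2
            exact (Finset.inter_eq_right.mpr (fun i hi => by
              rw [Finset.mem_Ico] at hi; rw [Finset.mem_range]; omega)).symm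
        _ = -∑ i ∈ Finset.range v, (if i ∈ Finset.Ico r p then c (i+1) - c i else 0) := by
            rw [Finset.sum_ite_mem]
        _ = -∑ i : Fin v, (if (i:ℕ) ∈ Finset.Ico r p then c ((i:ℕ)+1) - c (i:ℕ) else 0) := by
            rw [Fin.sum_univ_eq_sum_range (fun i => if i ∈ Finset.Ico r p then c (i+1) - c i else 0) v]
        _ = ∑ i : Fin v, -(if (i:ℕ) ∈ Finset.Ico r p then c ((i:ℕ)+1) - c (i:ℕ) else 0) := by
            rw [Finset.sum_neg_distrib]
        _ = ∑ i : Fin v, ((Dmat v (typeOf x) j i : ℚ)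
              * (if (i:ℕ)+1 < m then c ((i:ℕ)+1) - c (i:ℕ) else s₀)) := by
            exact Finset.sum_congr rfl (fun i _ => (hterm i).symm)

end Stmt17Aux

/-- let `G` be a nontrivial subgroup of `(ℚ,+)`, `S = G ∩ ℚ⁺`,
`v ∈ ℕ`, and `A` a `u × v` rational matrix weakly image partition regular over
`S`. Then there is a `u × v` rational matrix `C`, with entries in the subgroup
of ℚ generated by the entries of `A`, such that
(1) `{C y : y ∈ S^v} ⊆ {A x : x ∈ G^v}`, and (2) for every finite colouring of
`S` there is `x ∈ G^v` with the entries of `A x` monochromatic in `S` and some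
`y ∈ S^v` with `C y = A x`. -/
theorem stmt17 (G : AddSubgroup ℚ) (hG : ∃ g ∈ G, g ≠ (0 : ℚ))
    (S : Set ℚ) (hSdef : S = {q : ℚ | q ∈ G ∧ 0 < q})
    {u : Type} {v : ℕ} (A : u → Fin v → ℚ)
    (hwipr : WIPRQ' A S (G : Set ℚ)) :
    ∃ C : u → Fin v → ℚ,
      (∀ i j, C i j ∈ AddSubgroup.closure {q : ℚ | ∃ i' j', q = A i' j'}) ∧
      ({w : u → ℚ | ∃ y : Fin v → ℚ, (∀ j, y j ∈ S) ∧ w = mulVecQ C y} ⊆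
        {w : u → ℚ | ∃ x : Fin v → ℚ, (∀ j, x j ∈ G) ∧ w = mulVecQ A x}) ∧
      (∀ (k : ℕ) (φ : ℚ → Fin k), ∃ x : Fin v → ℚ,
        (∀ j, x j ∈ G) ∧ (∀ i, mulVecQ A x i ∈ S) ∧
        (∀ i i', φ (mulVecQ A x i) = φ (mulVecQ A x i')) ∧
        ∃ y : Fin v → ℚ, (∀ j, y j ∈ S) ∧ mulVecQ C y = mulVecQ A x) := by
  classical
  obtain ⟨g, hgG, hg0⟩ := hG
  obtain ⟨s₀, hs₀G, hs₀pos⟩ : ∃ s₀, s₀ ∈ G ∧ 0 < s₀ := by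
    rcases lt_or_gt_of_ne hg0 with h | h
    · exact ⟨-g, G.neg_mem hgG, by linarith⟩
    · exact ⟨g, hgG, h⟩
  -- pigeonhole over types
  have hT : ∃ t : Stmt17Aux.TypeSp v, ∀ (k : ℕ) (φ : ℚ → Fin k), ∃ x : Fin v → ℚ,
      (∀ j, x j ∈ G) ∧ (∀ i, mulVecQ A x i ∈ S) ∧
      (∀ i i', φ (mulVecQ A x i) = φ (mulVecQ A x i')) ∧ Stmt17Aux.typeOf x = t := by
    by_contra hcon
    push_neg at hcon
    choose k φ hbad using hcon
    let e := Fintype.equivFin (∀ t : Stmt17Aux.TypeSp v, Fin (k t))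
    obtain ⟨x, hxG, hxS, hxmono⟩ := hwipr
      (Fintype.card (∀ t : Stmt17Aux.TypeSp v, Fin (k t)))
      (fun q => e (fun t => φ t q))
    refine hbad (Stmt17Aux.typeOf x) x hxG hxS ?_ rfl
    intro i i'
    have h := e.injective (hxmono i i')
    exact congrFun h (Stmt17Aux.typeOf x)
  obtain ⟨t, ht⟩ := hT
  set D := Stmt17Aux.Dmat v t with hD
  refine ⟨fun i j => ∑ l : Fin v, A i l * (D l j : ℚ), ?_, ?_, ?_⟩
  · -- (1) entries in the closure
    intro i j
    refine AddSubgroup.sum_mem _ ?_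
    intro l _
    rw [mul_comm, ← zsmul_eq_mul]
    exact AddSubgroup.zsmul_mem _ (AddSubgroup.subset_closure (show A i l ∈ {q : ℚ | ∃ i' j', q = A i' j'} from ⟨i, l, rfl⟩)) _
  · -- (2) image inclusion
    rintro w ⟨y, hyS, rfl⟩
    refine ⟨fun l => ∑ i : Fin v, (D l i : ℚ) * y i, ?_, ?_⟩
    · intro l
      refine AddSubgroup.sum_mem _ ?_
      intro i _
      rw [← zsmul_eq_mul]
      have : y i ∈ G := by
        have := hyS i
        rw [hSdef] at this
        exact this.1
      exact AddSubgroup.zsmul_mem _ this _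
    · exact Stmt17Aux.mulVec_comp A D y
  · -- (3) partition regularity with witness in the image of C
    intro k φ
    obtain ⟨x, hxG, hxS, hxmono, hxt⟩ := ht k φ
    obtain ⟨y, hy, hxy⟩ := Stmt17Aux.reconstruct G s₀ hs₀G hs₀pos x hxG
    rw [hxt] at hxy
    refine ⟨x, hxG, hxS, hxmono, y, ?_, ?_⟩
    · intro j
      rw [hSdef]
      exact ⟨(hy j).1, (hy j).2⟩
    · rw [Stmt17Aux.mulVec_comp A D y]
      have hfx : (fun l => ∑ i : Fin v, (D l i : ℚ) * y i) = x :=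
        funext fun l => (hxy l).symm
      rw [hfx]
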